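/- Let 0 < α < 1, T > 0, let n ≥ 2 be an integer, and let u : [0, T] → ℝ be continuous, nonnegative and monotone with u' ∈ L¹(0, T). Then for every t ∈ (0, T] one has u(t)^{n-1} · D^α u(t) ≥ (1/n) · D^α (uⁿ)(t), where uⁿ denotes the function t ↦ u(t)ⁿ. -/

import Mathlib

open MeasureTheory

lemma aux_deriv_nonneg {u : ℝ → ℝ} {a b s : ℝ} (hm : MonotoneOn u (Set.Icc a b))
    (hs : s ∈ Set.Ioo a b) (hd : DifferentiableAt ℝ u s) : 0 ≤ deriv u s := by
  have hsl : Filter.Tendsto (slope u s) (nhdsWithin s (Set.Ioi s)) (nhds (deriv u s)) :=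
    ((hasDerivAt_iff_tendsto_slope).1 hd.hasDerivAt).mono_left
      (nhdsWithin_mono s fun y hy => Set.mem_compl_singleton_iff.mpr (ne_of_gt hy))
  refine ge_of_tendsto hsl ?_
  filter_upwards [Ioo_mem_nhdsGT_of_mem ⟨le_refl s, hs.2⟩] with y hy
  rw [slope_def_field]
  apply div_nonneg _ (by linarith [hy.1])
  have := hm ⟨hs.1.le, hs.2.le⟩ ⟨(hs.1.trans hy.1).le, hy.2.le⟩ hy.1.le
  linarith

lemma aux_deriv_nonpos {u : ℝ → ℝ} {a b s : ℝ} (hm : AntitoneOn u (Set.Icc a b))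
    (hs : s ∈ Set.Ioo a b) (hd : DifferentiableAt ℝ u s) : deriv u s ≤ 0 := by
  have hsl : Filter.Tendsto (slope u s) (nhdsWithin s (Set.Ioi s)) (nhds (deriv u s)) :=
    ((hasDerivAt_iff_tendsto_slope).1 hd.hasDerivAt).mono_left
      (nhdsWithin_mono s fun y hy => Set.mem_compl_singleton_iff.mpr (ne_of_gt hy))
  refine le_of_tendsto hsl ?_
  filter_upwards [Ioo_mem_nhdsGT_of_mem ⟨le_refl s, hs.2⟩] with y hy
  rw [slope_def_field]
  apply div_nonpos_of_nonpos_of_nonneg _ (by linarith [hy.1])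
  have := hm ⟨hs.1.le, hs.2.le⟩ ⟨(hs.1.trans hy.1).le, hy.2.le⟩ hy.1.le
  linarith


/-- The (left) Caputo fractional derivative of order `α` of `u : ℝ → ℝ`:
`D^α u (t) = (1/Γ(1-α)) ∫₀ᵗ (t-s)^(-α) u'(s) ds`. -/
noncomputable def caputoDeriv (α : ℝ) (u : ℝ → ℝ) (t : ℝ) : ℝ :=
  (1 / Real.Gamma (1 - α)) * ∫ s in Set.Ioo 0 t, (t - s) ^ (-α) * deriv u s

theorem stmt5 (α T : ℝ) (hα0 : 0 < α) (hα1 : α < 1) (hT : 0 < T)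
    (n : ℕ) (hn : 2 ≤ n)
    (u : ℝ → ℝ) (hc : ContinuousOn u (Set.Icc 0 T))
    (hnn : ∀ t ∈ Set.Icc 0 T, 0 ≤ u t)
    (hint : IntegrableOn (deriv u) (Set.Ioo 0 T))
    (hmono : MonotoneOn u (Set.Icc 0 T) ∨ AntitoneOn u (Set.Icc 0 T)) :
    ∀ t ∈ Set.Ioc 0 T,
      (1 / (n : ℝ)) * caputoDeriv α (fun s => (u s) ^ n) t
        ≤ (u t) ^ (n - 1) * caputoDeriv α u t := by
  intro t ht
  obtain ⟨ht0, htT⟩ := ht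
  have hΓ : 0 < Real.Gamma (1 - α) := Real.Gamma_pos_of_pos (by linarith)
  have hn0 : (0:ℝ) < n := by
    have : (0:ℕ) < n := lt_of_lt_of_le (by norm_num) hn
    exact_mod_cast this
  have htIcc : t ∈ Set.Icc 0 T := ⟨ht0.le, htT⟩
  have hut0 : 0 ≤ u t := hnn t htIcc
  have hc0 : 0 ≤ u t ^ (n - 1) := pow_nonneg hut0 _
  have hsubIcc : Set.Ioo 0 t ⊆ Set.Icc 0 T := fun s hs => ⟨hs.1.le, hs.2.le.trans htT⟩
  -- measurability helper
  have hφmeas : ∀ (S : Set ℝ), MeasurableSet S → S ⊆ Set.Iio t → ∀ (v : ℝ → ℝ),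
      AEStronglyMeasurable (fun s => (t - s) ^ (-α) * deriv v s) (volume.restrict S) := by
    intro S hS hsub v
    have hφ : ContinuousOn (fun s : ℝ => (t - s) ^ (-α)) S := by
      intro s hs
      have hst : s < t := hsub hs
      exact ((Real.continuousAt_rpow_const (t - s) (-α)
        (Or.inl (by linarith))).comp
        ((continuous_const.sub continuous_id).continuousAt)).continuousWithinAt
    exact (hφ.aestronglyMeasurable hS).mul ((measurable_deriv v).aestronglyMeasurable.restrict)
  -- max bound
  obtain ⟨x₀, hx₀mem, hx₀⟩ := isCompact_Icc.exists_isMaxOn (Set.nonempty_Icc.mpr hT.le) hc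
  have hM : ∀ s ∈ Set.Icc 0 T, u s ≤ u x₀ := fun s hs => hx₀ hs
  have hM0 : 0 ≤ u x₀ := hnn x₀ hx₀mem
  -- a.e. differentiability
  have hdiff : ∀ᵐ s ∂(volume.restrict (Set.Ioo 0 t)), DifferentiableAt ℝ u s := by
    have h1 : ∀ᵐ x : ℝ, x ∈ Set.Icc 0 T → DifferentiableWithinAt ℝ u (Set.Icc 0 T) x := by
      rcases hmono with hm | hm
      · exact hm.ae_differentiableWithinAt_of_mem
      · have hm' : MonotoneOn (fun x => -u x) (Set.Icc 0 T) :=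
          fun a ha b hb hab => neg_le_neg (hm ha hb hab)
        filter_upwards [hm'.ae_differentiableWithinAt_of_mem] with x hx hxmem
        simpa using (hx hxmem).neg
    filter_upwards [ae_restrict_of_ae h1, ae_restrict_mem measurableSet_Ioo] with s h1s hs
    exact (h1s (hsubIcc hs)).differentiableAt
      (Icc_mem_nhds hs.1 (lt_of_lt_of_le hs.2 htT))
  -- a.e. key package
  have hkey : ∀ᵐ s ∂(volume.restrict (Set.Ioo 0 t)),
      deriv (fun x => u x ^ n) s = n * u s ^ (n - 1) * deriv u s
      ∧ (t - s) ^ (-α) * deriv (fun x => u x ^ n) s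
          ≤ (n : ℝ) * u t ^ (n - 1) * ((t - s) ^ (-α) * deriv u s)
      ∧ |(t - s) ^ (-α) * deriv (fun x => u x ^ n) s|
          ≤ ((n : ℝ) * u x₀ ^ (n - 1)) * |(t - s) ^ (-α) * deriv u s| := by
    filter_upwards [hdiff, ae_restrict_mem measurableSet_Ioo] with s hds hs
    have hsIcc : s ∈ Set.Icc 0 T := hsubIcc hs
    have hus0 : 0 ≤ u s := hnn s hsIcc
    have hφpos : 0 < (t - s) ^ (-α) := Real.rpow_pos_of_pos (by linarith [hs.2]) _
    have hder : deriv (fun x => u x ^ n) s = n * u s ^ (n - 1) * deriv u s :=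
      (hds.hasDerivAt.pow n).deriv
    refine ⟨hder, ?_, ?_⟩
    · rw [hder]
      rcases hmono with hm | hm
      · have hd0 : 0 ≤ deriv u s :=
          aux_deriv_nonneg hm ⟨hs.1, lt_of_lt_of_le hs.2 htT⟩ hds
        have hle : u s ^ (n - 1) ≤ u t ^ (n - 1) :=
          pow_le_pow_left₀ hus0 (hm hsIcc htIcc hs.2.le) _
        nlinarith [mul_le_mul_of_nonneg_right hle (mul_nonneg hφpos.le hd0), hn0]
      · have hd0 : deriv u s ≤ 0 :=
          aux_deriv_nonpos hm ⟨hs.1, lt_of_lt_of_le hs.2 htT⟩ hds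
        have hle : u t ^ (n - 1) ≤ u s ^ (n - 1) :=
          pow_le_pow_left₀ hut0 (hm hsIcc htIcc hs.2.le) _
        nlinarith [mul_le_mul_of_nonpos_right hle (mul_nonpos_of_nonneg_of_nonpos hφpos.le hd0), hn0]
    · rw [hder]
      have h1 : |(t - s) ^ (-α) * ((n : ℝ) * u s ^ (n - 1) * deriv u s)|
          = ((n : ℝ) * u s ^ (n - 1)) * |(t - s) ^ (-α) * deriv u s| := by
        simp only [abs_mul, abs_of_nonneg hφpos.le,
          abs_of_nonneg (pow_nonneg hus0 _), abs_of_nonneg hn0.le]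
        ring
      rw [h1]
      have : u s ^ (n - 1) ≤ u x₀ ^ (n - 1) := pow_le_pow_left₀ hus0 (hM s hsIcc) _
      have habs : (0:ℝ) ≤ |(t - s) ^ (-α) * deriv u s| := abs_nonneg _
      nlinarith [mul_le_mul_of_nonneg_right this habs, hn0]
  -- main reduction
  suffices key : (∫ s in Set.Ioo 0 t, (t - s) ^ (-α) * deriv (fun x => u x ^ n) s)
      ≤ (n : ℝ) * u t ^ (n - 1) * ∫ s in Set.Ioo 0 t, (t - s) ^ (-α) * deriv u s by
    unfold caputoDeriv
    have hΓ' : (0:ℝ) < 1 / Real.Gamma (1 - α) := by positivity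
    calc (1 / (n:ℝ)) * ((1 / Real.Gamma (1 - α)) *
            ∫ s in Set.Ioo 0 t, (t - s) ^ (-α) * deriv (fun s => u s ^ n) s)
        ≤ (1 / (n:ℝ)) * ((1 / Real.Gamma (1 - α)) *
            ((n : ℝ) * u t ^ (n - 1) * ∫ s in Set.Ioo 0 t, (t - s) ^ (-α) * deriv u s)) := by
          apply mul_le_mul_of_nonneg_left _ (by positivity)
          exact mul_le_mul_of_nonneg_left key hΓ'.le
      _ = u t ^ (n - 1) * ((1 / Real.Gamma (1 - α)) *
            ∫ s in Set.Ioo 0 t, (t - s) ^ (-α) * deriv u s) := by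
          field_simp
  by_cases hg : IntegrableOn (fun s => (t - s) ^ (-α) * deriv u s) (Set.Ioo 0 t)
  · have hfint : IntegrableOn (fun s => (t - s) ^ (-α) * deriv (fun x => u x ^ n) s)
        (Set.Ioo 0 t) := by
      refine Integrable.mono' (hg.norm.const_mul ((n : ℝ) * u x₀ ^ (n - 1)))
        (hφmeas _ measurableSet_Ioo (fun s hs => hs.2) _) ?_
      filter_upwards [hkey] with s hs
      simpa only [Real.norm_eq_abs] using hs.2.2
    calc (∫ s in Set.Ioo 0 t, (t - s) ^ (-α) * deriv (fun x => u x ^ n) s)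
        ≤ ∫ s in Set.Ioo 0 t, (n : ℝ) * u t ^ (n - 1) * ((t - s) ^ (-α) * deriv u s) := by
          refine integral_mono_ae hfint (hg.const_mul _) ?_
          filter_upwards [hkey] with s hs using hs.2.1
      _ = (n : ℝ) * u t ^ (n - 1) * ∫ s in Set.Ioo 0 t, (t - s) ^ (-α) * deriv u s :=
          integral_const_mul _ _
  · rw [integral_undef hg, mul_zero]
    rcases hmono with hm | hm
    · by_cases hf : IntegrableOn (fun s => (t - s) ^ (-α) * deriv (fun x => u x ^ n) s)
          (Set.Ioo 0 t)
      · exfalso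
        apply hg
        by_cases hut : u t = 0
        · have hzero : Set.EqOn (fun s => (t - s) ^ (-α) * deriv u s) (fun _ => (0:ℝ))
              (Set.Ioo 0 t) := by
            intro s hs
            have hder0 : deriv u s = 0 := by
              have hev : u =ᶠ[nhds s] (fun _ => 0) := by
                filter_upwards [Ioo_mem_nhds hs.1 hs.2] with y hy
                have h1 : 0 ≤ u y := hnn y (hsubIcc hy)
                have h2 : u y ≤ u t := hm (hsubIcc hy) htIcc hy.2.le
                rw [hut] at h2
                linarith
              rw [hev.deriv_eq, deriv_const]
            simp [hder0]
          exact (integrableOn_congr_fun hzero measurableSet_Ioo).mpr (integrableOn_zero)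
        · have hut' : 0 < u t := lt_of_le_of_ne hut0 (Ne.symm hut)
          have hne : (nhdsWithin t (Set.Ioo 0 t)).NeBot := by
            rw [← mem_closure_iff_nhdsWithin_neBot, closure_Ioo (ne_of_lt ht0)]
            exact ⟨ht0.le, le_refl t⟩
          have hev : ∀ᶠ y in nhdsWithin t (Set.Ioo 0 t), u t / 2 < u y := by
            have hcw : ContinuousWithinAt u (Set.Icc 0 T) t := hc t htIcc
            have h0 : ∀ᶠ y in nhdsWithin t (Set.Icc 0 T), u t / 2 < u y :=
              hcw (Ioi_mem_nhds (half_lt_self hut'))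
            exact h0.filter_mono (nhdsWithin_mono t hsubIcc)
          obtain ⟨r, hru, hr⟩ := (hev.and eventually_mem_nhdsWithin).exists
          have hrt : r < t := hr.2
          have h1 : IntegrableOn (fun s => (t - s) ^ (-α) * deriv u s) (Set.Ioc 0 r) := by
            have hbase : IntegrableOn (deriv u) (Set.Ioc 0 r) :=
              hint.mono_set (fun s hs => ⟨hs.1, lt_of_le_of_lt hs.2 (lt_of_lt_of_le hrt htT)⟩)
            refine Integrable.mono' (hbase.norm.const_mul ((t - r) ^ (-α)))
              (hφmeas _ measurableSet_Ioc (fun s hs => lt_of_le_of_lt hs.2 hrt) _) ?_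
            filter_upwards [ae_restrict_mem measurableSet_Ioc] with s hs
            have hts : 0 < t - s := by linarith [hs.2, hrt]
            have hmono' : (t - s) ^ (-α) ≤ (t - r) ^ (-α) :=
              Real.rpow_le_rpow_of_nonpos (by linarith) (by linarith [hs.2]) (by linarith)
            have hφ0 : 0 ≤ (t - s) ^ (-α) := (Real.rpow_pos_of_pos hts _).le
            rw [Real.norm_eq_abs, Real.norm_eq_abs, abs_mul, abs_of_nonneg hφ0]
            exact mul_le_mul_of_nonneg_right hmono' (abs_nonneg _)
          have hsub2 : Set.Ioo r t ⊆ Set.Ioo 0 t := fun s hs => ⟨lt_trans hr.1 hs.1, hs.2⟩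
          have h2 : IntegrableOn (fun s => (t - s) ^ (-α) * deriv u s) (Set.Ioo r t) := by
            refine Integrable.mono'
              (((hf.mono_set hsub2).norm.const_mul (((n : ℝ) * (u t / 2) ^ (n - 1))⁻¹)))
              ((hφmeas _ measurableSet_Ioo (fun s hs => hs.2) _)) ?_
            have hkey2 := ae_restrict_of_ae_restrict_of_subset hsub2 hkey
            have hdiff2 := ae_restrict_of_ae_restrict_of_subset hsub2 hdiff
            filter_upwards [hkey2, hdiff2, ae_restrict_mem measurableSet_Ioo] with s hks hds hs
            have hs0 : s ∈ Set.Ioo 0 t := hsub2 hs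
            have hd0 : 0 ≤ deriv u s :=
              aux_deriv_nonneg hm ⟨hs0.1, lt_of_lt_of_le hs0.2 htT⟩ hds
            have hφ : 0 < (t - s) ^ (-α) := Real.rpow_pos_of_pos (by linarith [hs.2]) _
            have hg0 : 0 ≤ (t - s) ^ (-α) * deriv u s := mul_nonneg hφ.le hd0
            have husr : u t / 2 < u s :=
              lt_of_lt_of_le hru (hm (hsubIcc hr) (hsubIcc hs0) hs.1.le)
            have hb : (u t / 2) ^ (n - 1) ≤ u s ^ (n - 1) :=
              pow_le_pow_left₀ (by positivity) husr.le _
            have hpos : (0:ℝ) < (n : ℝ) * (u t / 2) ^ (n - 1) := by positivity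
            have hfs : (t - s) ^ (-α) * deriv (fun x => u x ^ n) s
                = (n : ℝ) * u s ^ (n - 1) * ((t - s) ^ (-α) * deriv u s) := by
              rw [hks.1]; ring
            rw [Real.norm_eq_abs, Real.norm_eq_abs, abs_of_nonneg hg0, hfs,
              abs_of_nonneg (mul_nonneg (mul_nonneg hn0.le
                (pow_nonneg (hnn s (hsubIcc hs0)) _)) hg0),
              inv_mul_eq_div, le_div_iff₀ hpos]
            nlinarith [mul_le_mul_of_nonneg_right hb hg0, hn0]
          exact (h1.union h2).mono_set (fun s hs => by
            rcases le_or_gt s r with h | h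
            · exact Or.inl ⟨hs.1, h⟩
            · exact Or.inr ⟨h, hs.2⟩)
      · rw [integral_undef hf]
    · apply integral_nonpos_of_ae
      filter_upwards [hkey, hdiff, ae_restrict_mem measurableSet_Ioo] with s hks hds hsm
      have hd0 : deriv u s ≤ 0 :=
        aux_deriv_nonpos hm ⟨hsm.1, lt_of_lt_of_le hsm.2 htT⟩ hds
      have hφ : 0 < (t - s) ^ (-α) := Real.rpow_pos_of_pos (by linarith [hsm.2]) _
      have hus0 : 0 ≤ u s := hnn s (hsubIcc hsm)
      show (t - s) ^ (-α) * deriv (fun x => u x ^ n) s ≤ 0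
      rw [hks.1]
      nlinarith [mul_nonpos_of_nonneg_of_nonpos
        (show (0:ℝ) ≤ (t - s) ^ (-α) * ((n : ℝ) * u s ^ (n - 1)) by positivity) hd0]
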